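/- Suppose b, c, g, e ∈ ℝˢ with e = c + g, and strictly lower triangular α, lower triangular γ with β = α + γ, c = α𝟙, g = γ𝟙. If bᵀ𝟙 = 1, bᵀe = 1/2, bᵀ(c∘c) = 1/3, and bᵀβe = 1/6, then the scalar polynomial R(z) = 1 + bᵀz(I - zβ)⁻¹𝟙 agrees with exp(z) up to O(z⁴): R(z) = 1 + z + z²/2 + z³/6 + O(z⁴) as z → 0. -/

import Mathlib

open Matrix Asymptotics

/-- The Rosenbrock order-3 conditions imply third-order accuracy of the linear
stability function: `R(z) = 1 + bᵀz(I - zβ)⁻¹𝟙 = 1 + z + z²/2 + z³/6 + O(z⁴)`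
as `z → 0`. -/
theorem order3_stability_expansion {s : ℕ}
    (b c g e : Fin s → ℝ) (α γ β : Matrix (Fin s) (Fin s) ℝ)
    (hα : ∀ i j : Fin s, i ≤ j → α i j = 0)
    (hγ : ∀ i j : Fin s, i < j → γ i j = 0)
    (hβ : β = α + γ) (hc : c = α *ᵥ 1) (hg : g = γ *ᵥ 1) (he : e = c + g)
    (h1 : b ⬝ᵥ 1 = 1) (h2 : b ⬝ᵥ e = 1 / 2)
    (h3 : b ⬝ᵥ (c * c) = 1 / 3) (h4 : b ⬝ᵥ (β *ᵥ e) = 1 / 6) :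
    (fun z : ℝ => (1 + z * (b ⬝ᵥ ((1 - z • β)⁻¹ *ᵥ 1))) -
        (1 + z + z ^ 2 / 2 + z ^ 3 / 6)) =O[nhds 0] (fun z : ℝ => z ^ 4) := by
  -- the remainder function
  set h : ℝ → ℝ := fun z => b ⬝ᵥ ((β ^ 3 * (1 - z • β)⁻¹) *ᵥ 1) with hh
  -- continuity facts
  have hmatc : Continuous fun z : ℝ => (1 : Matrix (Fin s) (Fin s) ℝ) - z • β :=
    continuous_const.sub (continuous_id.smul continuous_const)
  have hdetc : Continuous fun z : ℝ => ((1 : Matrix (Fin s) (Fin s) ℝ) - z • β).det :=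
    hmatc.matrix_det
  have hdet0 : ((1 : Matrix (Fin s) (Fin s) ℝ) - (0 : ℝ) • β).det = 1 := by simp
  -- eventually invertible
  have hevdet : ∀ᶠ z : ℝ in nhds 0, ((1 : Matrix (Fin s) (Fin s) ℝ) - z • β).det ≠ 0 := by
    have h0 : ContinuousAt (fun z : ℝ => ((1 : Matrix (Fin s) (Fin s) ℝ) - z • β).det) 0 :=
      hdetc.continuousAt
    have hm := h0.preimage_mem_nhds
      (show {x : ℝ | x ≠ 0} ∈ nhds ((1 - (0:ℝ) • β).det) by
        rw [hdet0]; exact isOpen_ne.mem_nhds one_ne_zero)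
    filter_upwards [hm] with z hz using hz
  -- continuity of the inverse at 0
  have hinvc : ContinuousAt (fun z : ℝ => ((1 : Matrix (Fin s) (Fin s) ℝ) - z • β)⁻¹) 0 := by
    have heqf : (fun z : ℝ => ((1 : Matrix (Fin s) (Fin s) ℝ) - z • β)⁻¹) =
        fun z : ℝ => Ring.inverse ((1 : Matrix (Fin s) (Fin s) ℝ) - z • β).det •
          ((1 : Matrix (Fin s) (Fin s) ℝ) - z • β).adjugate := by
      funext z; exact Matrix.inv_def _
    rw [heqf]
    apply ContinuousAt.smul (f := fun z : ℝ => Ring.inverse ((1 : Matrix (Fin s) (Fin s) ℝ) - z • β).det)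
      (g := fun z : ℝ => ((1 : Matrix (Fin s) (Fin s) ℝ) - z • β).adjugate)
    · simp only [Ring.inverse_eq_inv']
      exact hdetc.continuousAt.inv₀ (by rw [hdet0]; exact one_ne_zero)
    · exact hmatc.matrix_adjugate.continuousAt
  -- continuity of the remainder at 0
  have houter : Continuous fun M : Matrix (Fin s) (Fin s) ℝ => b ⬝ᵥ ((β ^ 3 * M) *ᵥ 1) :=
    continuous_const.dotProduct
      ((continuous_const.matrix_mul continuous_id).matrix_mulVec continuous_const)
  have hhc : ContinuousAt h 0 := houter.continuousAt.comp hinvc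
  -- eventual identity
  have hβ1 : β *ᵥ (1 : Fin s → ℝ) = e := by
    rw [hβ, Matrix.add_mulVec, ← hc, ← hg, he]
  have hev : ∀ᶠ z : ℝ in nhds 0,
      (1 + z * (b ⬝ᵥ ((1 - z • β)⁻¹ *ᵥ 1))) - (1 + z + z ^ 2 / 2 + z ^ 3 / 6)
        = z ^ 4 * h z := by
    filter_upwards [hevdet] with z hz
    have hu : IsUnit ((1 : Matrix (Fin s) (Fin s) ℝ) - z • β).det :=
      isUnit_iff_ne_zero.mpr hz
    set A : Matrix (Fin s) (Fin s) ℝ := 1 - z • β with hA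
    have hAinv : A * A⁻¹ = 1 := Matrix.mul_nonsing_inv _ hu
    set C : Matrix (Fin s) (Fin s) ℝ := z • β with hC
    have hA' : A = 1 - C := rfl
    have hkey : (1 + C + C ^ 2) * A = 1 - C ^ 3 := by
      rw [hA']; noncomm_ring
    have hinv_eq : A⁻¹ = 1 + C + C ^ 2 + C ^ 3 * A⁻¹ := by
      have h2' := congrArg (· * A⁻¹) hkey
      simp only [mul_assoc, hAinv, mul_one, sub_mul, one_mul] at h2'
      rw [h2']; abel
    have hCpow : ∀ k : ℕ, C ^ k = z ^ k • β ^ k := fun k => smul_pow z β k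
    have hv : A⁻¹ *ᵥ (1 : Fin s → ℝ) =
        1 + z • (β *ᵥ 1) + z ^ 2 • (β ^ 2 *ᵥ 1) + z ^ 3 • ((β ^ 3 * A⁻¹) *ᵥ 1) := by
      have hv0 := congrArg (fun M : Matrix (Fin s) (Fin s) ℝ => M *ᵥ (1 : Fin s → ℝ)) hinv_eq
      simp only [hCpow, hC, Matrix.add_mulVec, Matrix.one_mulVec, Matrix.smul_mulVec,
        pow_one, Matrix.smul_mul, smul_pow] at hv0
      exact hv0
    have hdot : b ⬝ᵥ (A⁻¹ *ᵥ (1 : Fin s → ℝ)) =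
        1 + z * (1/2) + z ^ 2 * (1/6) + z ^ 3 * h z := by
      rw [hv]
      simp only [dotProduct_add, dotProduct_smul, smul_eq_mul]
      have hb2 : β ^ 2 *ᵥ (1 : Fin s → ℝ) = β *ᵥ e := by
        rw [pow_two, ← Matrix.mulVec_mulVec, hβ1]
      rw [h1, hβ1, h2, hb2, h4, hh]
    rw [hdot]; ring
  -- conclude
  have hnorm : Filter.Tendsto (fun z => ‖h z‖) (nhds 0) (nhds ‖h 0‖) := hhc.tendsto.norm
  have hbound : ∀ᶠ z : ℝ in nhds 0, ‖h z‖ ≤ ‖h 0‖ + 1 :=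
    hnorm.eventually_le_const (lt_add_one _)
  have hO : h =O[nhds 0] (fun _ : ℝ => (1 : ℝ)) := by
    refine Asymptotics.isBigO_iff.mpr ⟨‖h 0‖ + 1, ?_⟩
    filter_upwards [hbound] with z hz
    simpa using hz
  have hOE : (fun z : ℝ => z ^ 4 * h z) =O[nhds 0] fun z : ℝ => z ^ 4 := by
    have := (Asymptotics.isBigO_refl (fun z : ℝ => z ^ 4) (nhds 0)).mul hO
    simpa using this
  exact (Filter.EventuallyEq.trans_isBigO hev hOE)
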